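/- arXiv:0811.0519 — 2 statements merged into one kernel-verified Lean document; each statement's English description precedes it below -/
import Mathlib

section
/- Let d ≥ 1 and let a be a Schwartz function on ℝ^{2d} and f, g Schwartz functions on ℝ^d. Define (Tψ)(x,ξ) = ψ(ξ, −x) for functions ψ on ℝ^{2d}. Then ( a(x,D)f , g )_{L²(ℝ^d)} = (2π)^{−d/2} ( T(𝓕a) , V_f g )_{L²(ℝ^{2d})}, where 𝓕a is the Fourier transform of a on ℝ^{2d} and V_f g is the short-time Fourier transform of g with window f. -/
open MeasureTheory Real Complex
open scoped ENNReal NNReal InnerProductSpace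

noncomputable section

/-- ℝ^d as a Euclidean space. -/
abbrev Ed (d : ℕ) : Type := EuclideanSpace ℝ (Fin d)

/-- ℝ^{2d}, written as pairs (x, ξ). -/
abbrev Pd (d : ℕ) : Type := Ed d × Ed d

/-- The standard symplectic form σ((x,ξ),(y,η)) = ⟨y,ξ⟩ − ⟨x,η⟩. -/
def sympForm {d : ℕ} (X Y : Pd d) : ℝ := ⟪Y.1, X.2⟫_ℝ - ⟪X.1, Y.2⟫_ℝ

/-- The symplectic Fourier transform (𝓕_σ a)(X) = π^{-d} ∫ a(Y) e^{2iσ(X,Y)} dY. -/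
def sFT {d : ℕ} (a : Pd d → ℂ) (X : Pd d) : ℂ :=
  ((π : ℝ) ^ d)⁻¹ • ∫ Y : Pd d, a Y * Complex.exp (2 * Complex.I * (sympForm X Y : ℂ))

/-- The symplectic short-time Fourier transform 𝒱_φ a(X,Y) = 𝓕_σ(a φ(·−X))(Y). -/
def sSTFT {d : ℕ} (φ a : Pd d → ℂ) (X Y : Pd d) : ℂ :=
  sFT (fun Z => a Z * φ (Z - X)) Y

/-- The twisted convolution (a ∗_σ b)(X) = (2/π)^{d/2} ∫ a(X−Y) b(Y) e^{2iσ(X,Y)} dY. -/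
def twConv {d : ℕ} (a b : Pd d → ℂ) (X : Pd d) : ℂ :=
  ((2 / π) ^ ((d : ℝ) / 2) : ℝ) •
    ∫ Y : Pd d, a (X - Y) * b Y * Complex.exp (2 * Complex.I * (sympForm X Y : ℂ))

/-- The Weyl product a # b = (2π)^{-d/2} a ∗_σ (𝓕_σ b). -/
def weylProd {d : ℕ} (a b : Pd d → ℂ) (X : Pd d) : ℂ :=
  ((2 * π) ^ (-(d : ℝ) / 2) : ℝ) • twConv a (sFT b) X

/-- Polynomially moderate positive measurable weight functions (the class 𝒫). -/
def polyModerate {E : Type*} [NormedAddCommGroup E] [MeasurableSpace E] (ω : E → ℝ) : Prop :=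
  (∀ x, 0 < ω x) ∧ Measurable ω ∧
    ∃ C : ℝ, 0 < C ∧ ∃ N : ℕ, ∀ x y, ω (x + y) ≤ C * ω x * (1 + ‖y‖) ^ N

/-- Weighted mixed norm ‖F‖_{L^{p,q}_{1,(ω)}}: exponent p in the first (inner)
variable, exponent q in the second (outer) variable. -/
def mixedNorm1 {α β : Type*} [MeasureSpace α] [MeasureSpace β] (p q : ℝ≥0∞)
    (ω : α × β → ℝ) (F : α × β → ℂ) : ℝ≥0∞ :=
  eLpNorm (fun y : β => (eLpNorm (fun x : α => ‖F (x, y)‖ * ω (x, y)) p volume).toReal) q volume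

/-- Weighted mixed norm ‖F‖_{L^{p,q}_{2,(ω)}}: exponent q in the second (inner)
variable, exponent p in the first (outer) variable. -/
def mixedNorm2 {α β : Type*} [MeasureSpace α] [MeasureSpace β] (p q : ℝ≥0∞)
    (ω : α × β → ℝ) (F : α × β → ℂ) : ℝ≥0∞ :=
  eLpNorm (fun x : α => (eLpNorm (fun y : β => ‖F (x, y)‖ * ω (x, y)) q volume).toReal) p volume

/-- Weighted Lebesgue norm ‖a‖_{L^p_{(ω)}} = ‖a ω‖_{L^p}. -/
def wLpNorm {α : Type*} [MeasureSpace α] (p : ℝ≥0∞) (ω : α → ℝ) (a : α → ℂ) : ℝ≥0∞ :=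
  eLpNorm (fun x => ‖a x‖ * ω x) p volume

/-- Short-time Fourier transform on ℝ^d. -/
def stft {d : ℕ} (φ f : Ed d → ℂ) (x ξ : Ed d) : ℂ :=
  ((2 * π) ^ (-(d : ℝ) / 2) : ℝ) •
    ∫ y : Ed d, f y * (starRingEnd ℂ) (φ (y - x)) * Complex.exp (-(⟪y, ξ⟫_ℝ : ℂ) * Complex.I)

/-- Euclidean pairing on ℝ^{2d}. -/
def pairing2 {d : ℕ} (X Y : Pd d) : ℝ := ⟪X.1, Y.1⟫_ℝ + ⟪X.2, Y.2⟫_ℝ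

/-- Short-time Fourier transform on ℝ^{2d}. -/
def stft2 {d : ℕ} (Φ F : Pd d → ℂ) (X Ξ : Pd d) : ℂ :=
  ((2 * π) ^ (-(2 * (d : ℝ)) / 2) : ℝ) •
    ∫ Y : Pd d, F Y * (starRingEnd ℂ) (Φ (Y - X)) * Complex.exp (-(pairing2 Y Ξ : ℂ) * Complex.I)

/-- The Fourier transform on ℝ^{2d}. -/
def fourier2 {d : ℕ} (F : Pd d → ℂ) (Ξ : Pd d) : ℂ :=
  ((2 * π) ^ (-(2 * (d : ℝ)) / 2) : ℝ) •
    ∫ X : Pd d, F X * Complex.exp (-(pairing2 X Ξ : ℂ) * Complex.I)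

/-- Kohn–Nirenberg pseudo-differential operator a(x,D). -/
def pseudoOp {d : ℕ} (a : Pd d → ℂ) (f : Ed d → ℂ) (x : Ed d) : ℂ :=
  ((2 * π) ^ (-(d : ℝ)) : ℝ) •
    ∫ ξ : Ed d, ∫ y : Ed d, a (x, ξ) * f y * Complex.exp ((⟪x - y, ξ⟫_ℝ : ℂ) * Complex.I)

/-- L² pairing (f, g) = ∫ f conj(g). -/
def L2pair {α : Type*} [MeasureSpace α] (f g : α → ℂ) : ℂ :=
  ∫ x, f x * (starRingEnd ℂ) (g x)

/-- Cross-Wigner distribution. -/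
def wigner {d : ℕ} (f g : Ed d → ℂ) (x ξ : Ed d) : ℂ :=
  ((2 * π) ^ (-(d : ℝ) / 2) : ℝ) •
    ∫ y : Ed d, f (x - (2⁻¹ : ℝ) • y) * (starRingEnd ℂ) (g (x + (2⁻¹ : ℝ) • y)) *
      Complex.exp ((⟪y, ξ⟫_ℝ : ℂ) * Complex.I)

open scoped FourierTransform

namespace Stmt16




lemma schwartz_bound {E : Type*} [NormedAddCommGroup E] [NormedSpace ℝ E]
    (φ : SchwartzMap E ℂ) (k : ℕ) :
    ∃ C : ℝ, 0 ≤ C ∧ ∀ x, ‖φ x‖ ≤ C * ((1 + ‖x‖) ^ k)⁻¹ := by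
  refine ⟨2 ^ k * (Finset.Iic ((k : ℕ), (0:ℕ))).sup
      (fun m => SchwartzMap.seminorm ℝ m.1 m.2) φ, by positivity, fun x => ?_⟩
  have h := SchwartzMap.one_add_le_sup_seminorm_apply (𝕜 := ℝ) (m := (k, 0))
      le_rfl le_rfl φ x
  rw [norm_iteratedFDeriv_zero] at h
  have hpos : (0:ℝ) < (1 + ‖x‖) ^ k := by positivity
  rw [← div_eq_mul_inv, le_div_iff₀ hpos, mul_comm]
  exact h

lemma integrable_decay (d k : ℕ) (hk : d < k) :
    Integrable (fun x : Ed d => ((1 + ‖x‖) ^ k)⁻¹) := by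
  have h := integrable_one_add_norm (E := Ed d) (μ := volume) (r := (k : ℝ))
    (by rw [finrank_euclideanSpace_fin]; exact_mod_cast hk)
  refine h.congr (Filter.Eventually.of_forall fun x => ?_)
  simp only []
  rw [Real.rpow_neg (by positivity : (0:ℝ) ≤ 1 + ‖x‖), Real.rpow_natCast]

lemma norm_exp_neg_I (r : ℝ) : ‖Complex.exp (-(r:ℂ) * Complex.I)‖ = 1 := by
  simp [Complex.norm_exp]

lemma norm_exp_pos_I (r : ℝ) : ‖Complex.exp ((r:ℂ) * Complex.I)‖ = 1 := by
  simp [Complex.norm_exp]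

lemma prod_bound_split {d k : ℕ} {C : ℝ} (hC : 0 ≤ C) {Φ : Pd d → ℂ}
    (h : ∀ X, ‖Φ X‖ ≤ C * ((1 + ‖X‖) ^ (2 * k))⁻¹) (u v : Ed d) :
    ‖Φ (u, v)‖ ≤ C * (((1 + ‖u‖) ^ k)⁻¹ * ((1 + ‖v‖) ^ k)⁻¹) := by
  refine (h (u, v)).trans ?_
  rw [← mul_inv]
  have h1 : (1 + ‖u‖) ≤ 1 + ‖((u, v) : Pd d)‖ := by
    have := norm_fst_le ((u, v) : Pd d); simp only at this; linarith
  have h2 : (1 + ‖v‖) ≤ 1 + ‖((u, v) : Pd d)‖ := by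
    have := norm_snd_le ((u, v) : Pd d); simp only at this; linarith
  have key : (1 + ‖u‖) ^ k * (1 + ‖v‖) ^ k ≤ (1 + ‖((u,v) : Pd d)‖) ^ (2 * k) := by
    rw [two_mul, pow_add]
    gcongr <;> positivity
  gcongr
  all_goals positivity


abbrev E2 (d : ℕ) : Type := EuclideanSpace ℝ (Fin d ⊕ Fin d)

def eEq (d : ℕ) : E2 d ≃ₗ[ℝ] Pd d where
  toFun Z := (WithLp.toLp 2 (fun i => Z (Sum.inl i)), WithLp.toLp 2 (fun i => Z (Sum.inr i)))
  invFun p := WithLp.toLp 2 (fun s => Sum.elim p.1 p.2 s)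
  map_add' Z W := by ext i <;> rfl
  map_smul' c Z := by ext i <;> rfl
  left_inv Z := by ext s; cases s <;> rfl
  right_inv p := by ext i <;> rfl

def eCLE (d : ℕ) : E2 d ≃L[ℝ] Pd d := (eEq d).toContinuousLinearEquiv

lemma eCLE_apply (d : ℕ) (Z : E2 d) : eCLE d Z = eEq d Z := rfl

lemma eEq_measurePreserving (d : ℕ) :
    MeasurePreserving (eEq d) volume volume := by
  have m1 : MeasurePreserving ((MeasurableEquiv.toLp 2 (Fin d ⊕ Fin d → ℝ)).symm) volume volume :=
    EuclideanSpace.volume_preserving_symm_measurableEquiv_toLp _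
  have m2 : MeasurePreserving (MeasurableEquiv.sumPiEquivProdPi (fun _ : Fin d ⊕ Fin d => ℝ))
      volume volume := volume_measurePreserving_sumPiEquivProdPi _
  have m3 : MeasurePreserving
      (Prod.map ((MeasurableEquiv.toLp 2 (Fin d → ℝ)).symm).symm
        ((MeasurableEquiv.toLp 2 (Fin d → ℝ)).symm).symm)
      (volume : Measure ((Fin d → ℝ) × (Fin d → ℝ))) (volume : Measure (Pd d)) := by
    rw [Measure.volume_eq_prod, Measure.volume_eq_prod]
    exact ((EuclideanSpace.volume_preserving_symm_measurableEquiv_toLp (Fin d)).symm).prod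
      ((EuclideanSpace.volume_preserving_symm_measurableEquiv_toLp (Fin d)).symm)
  have : ⇑(eEq d) = (Prod.map ((MeasurableEquiv.toLp 2 (Fin d → ℝ)).symm).symm
        ((MeasurableEquiv.toLp 2 (Fin d → ℝ)).symm).symm) ∘
      (MeasurableEquiv.sumPiEquivProdPi (fun _ : Fin d ⊕ Fin d => ℝ)) ∘
      ((MeasurableEquiv.toLp 2 (Fin d ⊕ Fin d → ℝ)).symm) := by
    funext Z; rfl
  rw [this]
  exact (m3.comp m2).comp m1

lemma pairing2_eEq {d : ℕ} (Z W : E2 d) : pairing2 (eEq d Z) (eEq d W) = ⟪Z, W⟫_ℝ := by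
  simp only [pairing2, eEq, LinearEquiv.coe_mk, PiLp.inner_apply, RCLike.inner_apply,
    conj_trivial]
  rw [Fintype.sum_sum_type]
  rfl

lemma norm_eEq_le {d : ℕ} (Z : E2 d) : ‖eEq d Z‖ ≤ ‖Z‖ := by
  have h : ∀ p : Fin d → (Fin d ⊕ Fin d), Function.Injective p →
      Real.sqrt (∑ i : Fin d, ‖Z (p i)‖ ^ 2) ≤ ‖Z‖ := by
    intro p hp
    rw [EuclideanSpace.norm_eq Z]
    apply Real.sqrt_le_sqrt
    have := Finset.sum_le_univ_sum_of_nonneg (f := fun s => ‖Z s‖ ^ 2)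
        (s := Finset.univ.image p) (fun s => by positivity)
    refine le_trans ?_ this
    rw [Finset.sum_image (by intro x _ y _ h; exact hp h)]
  rw [Prod.norm_def]
  apply max_le
  · rw [EuclideanSpace.norm_eq]
    exact h Sum.inl Sum.inl_injective
  · rw [EuclideanSpace.norm_eq]
    exact h Sum.inr Sum.inr_injective

lemma norm_le_eEq_symm {d : ℕ} (Ξ : Pd d) : ‖Ξ‖ ≤ ‖(eEq d).symm Ξ‖ := by
  have := norm_eEq_le ((eEq d).symm Ξ)
  rwa [LinearEquiv.apply_symm_apply] at this


variable {d : ℕ}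

def a2 (a : SchwartzMap (Pd d) ℂ) : SchwartzMap (E2 d) ℂ :=
  SchwartzMap.compCLMOfContinuousLinearEquiv ℂ (eCLE d) a

lemma a2_apply (a : SchwartzMap (Pd d) ℂ) (Z : E2 d) : a2 a Z = a (eEq d Z) := rfl

lemma two_pi_pos : (0:ℝ) < 2 * π := by positivity

lemma one_le_two_pi : (1:ℝ) ≤ 2 * π := by nlinarith [Real.pi_gt_three]

lemma hc2d : ((2 * π : ℝ) ^ (-(2 * (d:ℝ)) / 2)) = ((2*π)^d : ℝ)⁻¹ := by
  rw [show -(2 * (d:ℝ)) / 2 = -(d:ℝ) by ring, Real.rpow_neg two_pi_pos.le,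
    Real.rpow_natCast]

lemma fourier2_eq_schwartz (a : SchwartzMap (Pd d) ℂ) (Ξ : Pd d) :
    fourier2 ⇑a Ξ = (((2*π)^d : ℝ))⁻¹ • (𝓕 ⇑(a2 a)) ((2*π)⁻¹ • (eEq d).symm Ξ) := by
  rw [fourier2, hc2d]
  congr 1
  have hme : MeasurableEmbedding (⇑(eEq d)) :=
    (eCLE d).toHomeomorph.measurableEmbedding
  rw [Real.fourier_eq',
    ← (eEq_measurePreserving d).integral_comp hme
      (fun X => a X * Complex.exp (-(pairing2 X Ξ : ℂ) * Complex.I))]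
  congr 1
  funext Z
  have hp : pairing2 (eEq d Z) Ξ = ⟪Z, (eEq d).symm Ξ⟫_ℝ := by
    conv_lhs => rw [← LinearEquiv.apply_symm_apply (eEq d) Ξ]
    exact pairing2_eEq Z ((eEq d).symm Ξ)
  have harg : -2 * π * ⟪Z, (2*π)⁻¹ • (eEq d).symm Ξ⟫_ℝ = -(pairing2 (eEq d Z) Ξ) := by
    rw [hp, real_inner_smul_right]
    field_simp
  rw [harg]
  rw [smul_eq_mul, mul_comm]
  push_cast
  rfl

def b2 (a : SchwartzMap (Pd d) ℂ) : SchwartzMap (E2 d) ℂ :=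
  SchwartzMap.fourierTransformCLM ℂ (a2 a)

lemma b2_coe (a : SchwartzMap (Pd d) ℂ) : ⇑(b2 a) = 𝓕 ⇑(a2 a) :=
  SchwartzMap.fourier_coe (a2 a)

lemma fourier2_eq_b2 (a : SchwartzMap (Pd d) ℂ) (Ξ : Pd d) :
    fourier2 ⇑a Ξ = (((2*π)^d : ℝ))⁻¹ • b2 a ((2*π)⁻¹ • (eEq d).symm Ξ) := by
  rw [fourier2_eq_schwartz, ← b2_coe]

lemma fourier2_cont (a : SchwartzMap (Pd d) ℂ) : Continuous (fourier2 ⇑a) := by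
  have : fourier2 ⇑a = fun Ξ => (((2*π)^d : ℝ))⁻¹ • b2 a ((2*π)⁻¹ • (eEq d).symm Ξ) :=
    funext (fourier2_eq_b2 a)
  rw [this]
  have hsc : Continuous (⇑(eEq d).symm) := (eCLE d).symm.continuous
  exact ((b2 a).continuous.comp ((hsc.const_smul ((2*π)⁻¹ : ℝ)))).const_smul (((2*π)^d : ℝ))⁻¹

lemma fourier2_decay (a : SchwartzMap (Pd d) ℂ) :
    ∃ C : ℝ, 0 ≤ C ∧ ∀ Ξ : Pd d, ‖fourier2 ⇑a Ξ‖ ≤ C * ((1 + ‖Ξ‖) ^ (2*(d+1)))⁻¹ := by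
  obtain ⟨C0, hC0, hb⟩ := schwartz_bound (b2 a) (2*(d+1))
  refine ⟨(((2*π)^d : ℝ))⁻¹ * C0 * (2*π) ^ (2*(d+1)), by positivity, fun Ξ => ?_⟩
  rw [fourier2_eq_b2]
  set w := (2*π)⁻¹ • (eEq d).symm Ξ with hw
  have h1 : ‖((((2*π)^d : ℝ))⁻¹ • b2 a w)‖ = (((2*π)^d : ℝ))⁻¹ * ‖b2 a w‖ := by
    rw [norm_smul, Real.norm_eq_abs, abs_of_pos (by positivity)]
  rw [h1]
  have h2 : ‖b2 a w‖ ≤ C0 * ((1 + ‖w‖) ^ (2*(d+1)))⁻¹ := hb w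
  have hΞw : 1 + ‖Ξ‖ ≤ (2*π) * (1 + ‖w‖) := by
    have : ‖w‖ = (2*π)⁻¹ * ‖(eEq d).symm Ξ‖ := by
      rw [hw, norm_smul, Real.norm_eq_abs, abs_of_pos (by positivity)]
    have hΞ : ‖Ξ‖ ≤ (2*π) * ‖w‖ := by
      rw [this, ← mul_assoc, mul_inv_cancel₀ two_pi_pos.ne', one_mul]
      exact norm_le_eEq_symm Ξ
    nlinarith [one_le_two_pi, norm_nonneg w]
  have h3 : ((1 + ‖w‖) ^ (2*(d+1)))⁻¹ ≤ (2*π) ^ (2*(d+1)) * ((1 + ‖Ξ‖) ^ (2*(d+1)))⁻¹ := by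
    rw [← div_eq_mul_inv, le_div_iff₀ (by positivity), inv_mul_eq_div, div_le_iff₀ (by positivity)]
    calc (1 + ‖Ξ‖) ^ (2*(d+1)) ≤ ((2*π) * (1 + ‖w‖)) ^ (2*(d+1)) := by
          gcongr
      _ = (2*π) ^ (2*(d+1)) * (1 + ‖w‖) ^ (2*(d+1)) := by rw [mul_pow]
  calc (((2*π)^d : ℝ))⁻¹ * ‖b2 a w‖ ≤ (((2*π)^d : ℝ))⁻¹ * (C0 * ((1 + ‖w‖) ^ (2*(d+1)))⁻¹) := by
        gcongr
    _ ≤ (((2*π)^d : ℝ))⁻¹ * (C0 * ((2*π) ^ (2*(d+1)) * ((1 + ‖Ξ‖) ^ (2*(d+1)))⁻¹)) := by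
        gcongr
    _ = (((2*π)^d : ℝ))⁻¹ * C0 * (2*π) ^ (2*(d+1)) * ((1 + ‖Ξ‖) ^ (2*(d+1)))⁻¹ := by ring

lemma fourier2_decay' (a : SchwartzMap (Pd d) ℂ) :
    ∃ C : ℝ, 0 ≤ C ∧ ∀ u v : Ed d, ‖fourier2 ⇑a (u, v)‖ ≤
      C * (((1 + ‖u‖) ^ (d+1))⁻¹ * ((1 + ‖v‖) ^ (d+1))⁻¹) := by
  obtain ⟨C, hC, h⟩ := fourier2_decay a
  exact ⟨C, hC, fun u v => prod_bound_split hC h u v⟩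

lemma a_decay' (a : SchwartzMap (Pd d) ℂ) :
    ∃ C : ℝ, 0 ≤ C ∧ ∀ u v : Ed d, ‖a (u, v)‖ ≤
      C * (((1 + ‖u‖) ^ (d+1))⁻¹ * ((1 + ‖v‖) ^ (d+1))⁻¹) := by
  obtain ⟨C, hC, h⟩ := schwartz_bound a (2*(d+1))
  exact ⟨C, hC, fun u v => prod_bound_split hC h u v⟩

def Kf {d : ℕ} (a : Pd d → ℂ) (x w : Ed d) : ℂ :=
  ∫ v, a (x, v) * Complex.exp (-(⟪v, w⟫_ℝ : ℂ) * Complex.I)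

lemma inv_pow_le_one {t : ℝ} (ht : 0 ≤ t) (k : ℕ) : ((1 + t) ^ k)⁻¹ ≤ 1 :=
  inv_le_one_of_one_le₀ (one_le_pow₀ (by linarith))

variable {d : ℕ}

lemma exp_inner_cont (w : Ed d) : Continuous fun v : Ed d =>
    Complex.exp (-(⟪v, w⟫_ℝ : ℂ) * Complex.I) := by
  apply Complex.continuous_exp.comp
  exact (((Complex.continuous_ofReal.comp
    ((continuous_id.inner continuous_const))).neg).mul continuous_const)

lemma integrand_int (a : SchwartzMap (Pd d) ℂ) (x w : Ed d) :
    Integrable (fun v : Ed d => a (x, v) * Complex.exp (-(⟪v, w⟫_ℝ : ℂ) * Complex.I)) := by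
  obtain ⟨C, hC, h⟩ := a_decay' a
  refine ((integrable_decay d (d+1) (by omega)).const_mul C).mono' ?_ ?_
  · exact ((a.continuous.comp (Continuous.prodMk_right x)).mul (exp_inner_cont w)).aestronglyMeasurable
  · filter_upwards with v
    rw [norm_mul, norm_exp_neg_I, mul_one]
    have h1 : ((1+‖x‖)^(d+1))⁻¹ ≤ 1 := inv_pow_le_one (norm_nonneg x) (d+1)
    have h2 : (0:ℝ) ≤ ((1+‖v‖)^(d+1))⁻¹ := by positivity
    have h0 : (0:ℝ) ≤ ((1+‖x‖)^(d+1))⁻¹ := by positivity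
    calc ‖a (x,v)‖ ≤ C * (((1+‖x‖)^(d+1))⁻¹ * ((1+‖v‖)^(d+1))⁻¹) := h x v
      _ ≤ C * ((1+‖v‖)^(d+1))⁻¹ :=
        mul_le_mul_of_nonneg_left (mul_le_of_le_one_left h2 h1) hC

lemma Kf_cont (a : SchwartzMap (Pd d) ℂ) : Continuous fun p : Pd d => Kf ⇑a p.1 p.2 := by
  obtain ⟨C, hC, h⟩ := a_decay' a
  apply continuous_of_dominated (bound := fun v : Ed d => C * ((1+‖v‖)^(d+1))⁻¹)
  · intro p
    exact ((a.continuous.comp (Continuous.prodMk_right p.1)).mul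
      (exp_inner_cont p.2)).aestronglyMeasurable
  · intro p
    filter_upwards with v
    rw [norm_mul, norm_exp_neg_I, mul_one]
    have h1 : ((1+‖p.1‖)^(d+1))⁻¹ ≤ 1 := inv_pow_le_one (norm_nonneg p.1) (d+1)
    have h2 : (0:ℝ) ≤ ((1+‖v‖)^(d+1))⁻¹ := by positivity
    have h0 : (0:ℝ) ≤ ((1+‖p.1‖)^(d+1))⁻¹ := by positivity
    calc ‖a (p.1,v)‖ ≤ C * (((1+‖p.1‖)^(d+1))⁻¹ * ((1+‖v‖)^(d+1))⁻¹) := h p.1 v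
      _ ≤ C * ((1+‖v‖)^(d+1))⁻¹ :=
        mul_le_mul_of_nonneg_left (mul_le_of_le_one_left h2 h1) hC
  · exact (integrable_decay d (d+1) (by omega)).const_mul C
  · filter_upwards with v
    have hc1 : Continuous fun p : Pd d => a (p.1, v) :=
      a.continuous.comp (continuous_fst.prodMk continuous_const)
    have hc2 : Continuous fun p : Pd d =>
        Complex.exp (-(⟪v, p.2⟫_ℝ : ℂ) * Complex.I) := by
      apply Complex.continuous_exp.comp
      exact ((Complex.continuous_ofReal.comp
        (continuous_const.inner continuous_snd)).neg).mul continuous_const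
    exact hc1.mul hc2

lemma Kf_decay (a : SchwartzMap (Pd d) ℂ) :
    ∃ C : ℝ, 0 ≤ C ∧ ∀ x w : Ed d, ‖Kf ⇑a x w‖ ≤ C * ((1+‖x‖)^(d+1))⁻¹ := by
  obtain ⟨C, hC, h⟩ := a_decay' a
  refine ⟨C * ∫ v : Ed d, ((1+‖v‖)^(d+1))⁻¹, by positivity, fun x w => ?_⟩
  have hIdec : (0:ℝ) ≤ ∫ v : Ed d, ((1+‖v‖)^(d+1))⁻¹ :=
    integral_nonneg fun v => by positivity
  have hb : ∀ᵐ v : Ed d, ‖a (x, v) * Complex.exp (-(⟪v, w⟫_ℝ : ℂ) * Complex.I)‖ ≤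
      (C * ((1+‖x‖)^(d+1))⁻¹) * ((1+‖v‖)^(d+1))⁻¹ := by
    filter_upwards with v
    rw [norm_mul, norm_exp_neg_I, mul_one]
    calc ‖a (x,v)‖ ≤ C * (((1+‖x‖)^(d+1))⁻¹ * ((1+‖v‖)^(d+1))⁻¹) := h x v
      _ = (C * ((1+‖x‖)^(d+1))⁻¹) * ((1+‖v‖)^(d+1))⁻¹ := by ring
  have := norm_integral_le_of_norm_le
    ((integrable_decay d (d+1) (by omega)).const_mul (C * ((1+‖x‖)^(d+1))⁻¹)) hb
  rw [MeasureTheory.integral_const_mul] at this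
  calc ‖Kf ⇑a x w‖ ≤ (C * ((1+‖x‖)^(d+1))⁻¹) * ∫ v : Ed d, ((1+‖v‖)^(d+1))⁻¹ := this
    _ = C * (∫ v : Ed d, ((1+‖v‖)^(d+1))⁻¹) * ((1+‖x‖)^(d+1))⁻¹ := by ring

lemma Kf_integrable (a : SchwartzMap (Pd d) ℂ) (w : Ed d) :
    Integrable (fun x : Ed d => Kf ⇑a x w) := by
  obtain ⟨C, hC, h⟩ := Kf_decay a
  refine ((integrable_decay d (d+1) (by omega)).const_mul C).mono' ?_ ?_
  · exact ((Kf_cont a).comp (continuous_id.prodMk continuous_const)).aestronglyMeasurable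
  · filter_upwards with x using h x w

lemma pair_integrable (a : SchwartzMap (Pd d) ℂ) (Ξ : Pd d) :
    Integrable (fun X : Pd d => a X * Complex.exp (-(pairing2 X Ξ : ℂ) * Complex.I)) := by
  obtain ⟨C, hC, h⟩ := a_decay' a
  have hbint : Integrable (fun X : Pd d =>
      (C * ((1+‖X.1‖)^(d+1))⁻¹) * ((1+‖X.2‖)^(d+1))⁻¹) := by
    rw [Measure.volume_eq_prod]
    exact ((integrable_decay d (d+1) (by omega)).const_mul C).mul_prod
      (integrable_decay d (d+1) (by omega))
  refine hbint.mono' ?_ ?_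
  · apply Continuous.aestronglyMeasurable
    apply a.continuous.mul
    apply Complex.continuous_exp.comp
    refine (Continuous.neg ?_).mul continuous_const
    apply Complex.continuous_ofReal.comp
    show Continuous fun X : Pd d => pairing2 X Ξ
    simp only [pairing2]
    exact (continuous_fst.inner continuous_const).add (continuous_snd.inner continuous_const)
  · filter_upwards with X
    rw [norm_mul, norm_exp_neg_I, mul_one]
    calc ‖a X‖ ≤ C * (((1+‖X.1‖)^(d+1))⁻¹ * ((1+‖X.2‖)^(d+1))⁻¹) := h X.1 X.2
      _ = _ := by ring

lemma fourier2_iterated (a : SchwartzMap (Pd d) ℂ) (Ξ : Pd d) :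
    fourier2 ⇑a Ξ = (((2*π)^d : ℝ))⁻¹ •
      ∫ u : Ed d, Kf ⇑a u Ξ.2 * Complex.exp (-(⟪u, Ξ.1⟫_ℝ : ℂ) * Complex.I) := by
  rw [fourier2, hc2d]
  congr 1
  have hInt := pair_integrable a Ξ
  rw [Measure.volume_eq_prod] at hInt
  rw [show (volume : Measure (Pd d)) = (volume : Measure (Ed d)).prod volume from
    Measure.volume_eq_prod _ _, MeasureTheory.integral_prod _ hInt]
  congr 1
  funext u
  have hexp : ∀ v : Ed d, Complex.exp (-(pairing2 (u, v) Ξ : ℂ) * Complex.I) =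
      Complex.exp (-(⟪v, Ξ.2⟫_ℝ : ℂ) * Complex.I) *
      Complex.exp (-(⟪u, Ξ.1⟫_ℝ : ℂ) * Complex.I) := by
    intro v
    rw [← Complex.exp_add]
    congr 1
    have : pairing2 (u, v) Ξ = ⟪u, Ξ.1⟫_ℝ + ⟪v, Ξ.2⟫_ℝ := rfl
    rw [this]
    push_cast
    ring
  simp_rw [hexp, ← mul_assoc]
  rw [integral_mul_const]
  rfl

lemma key_inversion (a : SchwartzMap (Pd d) ℂ) (x y : Ed d) :
    (∫ ξ : Ed d, fourier2 ⇑a (ξ, -x) * Complex.exp ((⟪y, ξ⟫_ℝ : ℂ) * Complex.I))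
      = Kf ⇑a y (-x) := by
  set b : Ed d → ℂ := fun u => Kf ⇑a u (-x) with hbdef
  have hb_cont : Continuous b := (Kf_cont a).comp (continuous_id.prodMk continuous_const)
  have hb_int : Integrable b := Kf_integrable a (-x)
  have hFb : ∀ w : Ed d, 𝓕 b w = ((2*π:ℝ)^d) • fourier2 ⇑a ((2*π:ℝ) • w, -x) := by
    intro w
    rw [fourier2_iterated, smul_smul, mul_inv_cancel₀ (by positivity : ((2*π:ℝ)^d) ≠ 0), one_smul,
      Real.fourier_eq']
    congr 1
    funext u
    rw [smul_eq_mul, mul_comm]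
    congr 2
    have h1 : ⟪u, ((2*π:ℝ) • w, -x).1⟫_ℝ = 2*π*⟪u,w⟫_ℝ := real_inner_smul_right _ _ _
    rw [h1]
    push_cast
    ring
  have h2 : ∀ ξ : Ed d, fourier2 ⇑a (ξ, -x) = (((2*π:ℝ)^d))⁻¹ • 𝓕 b ((2*π:ℝ)⁻¹ • ξ) := by
    intro ξ
    rw [hFb ((2*π:ℝ)⁻¹ • ξ), smul_smul, smul_smul, mul_inv_cancel₀ two_pi_pos.ne', one_smul,
      inv_mul_cancel₀ (by positivity : ((2*π:ℝ)^d) ≠ 0), one_smul]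
  have hFb_int : Integrable (𝓕 b) := by
    obtain ⟨C, hC, h⟩ := fourier2_decay' a
    have hcont : Continuous (𝓕 b) := by
      have : 𝓕 b = fun w => ((2*π:ℝ)^d) • fourier2 ⇑a ((2*π:ℝ) • w, -x) := funext hFb
      rw [this]
      exact ((fourier2_cont a).comp
        ((continuous_id.const_smul (2*π:ℝ)).prodMk continuous_const)).const_smul ((2*π:ℝ)^d)
    refine ((integrable_decay d (d+1) (by omega)).const_mul
        ((2*π)^d * (C * ((1+‖x‖)^(d+1))⁻¹))).mono' hcont.aestronglyMeasurable ?_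
    filter_upwards with w
    rw [hFb w, norm_smul, Real.norm_eq_abs, abs_of_pos (by positivity : (0:ℝ) < (2*π)^d)]
    have hb1 : ‖fourier2 ⇑a ((2*π:ℝ) • w, -x)‖ ≤
        C * (((1 + ‖(2*π:ℝ) • w‖)^(d+1))⁻¹ * ((1 + ‖-x‖)^(d+1))⁻¹) := h _ _
    have hnw : ‖w‖ ≤ ‖(2*π:ℝ) • w‖ := by
      rw [norm_smul, Real.norm_eq_abs, abs_of_pos two_pi_pos]
      nlinarith [one_le_two_pi, norm_nonneg w]
    have hmono : ((1 + ‖(2*π:ℝ) • w‖)^(d+1))⁻¹ ≤ ((1 + ‖w‖)^(d+1))⁻¹ := by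
      gcongr
    rw [norm_neg] at hb1
    calc (2*π)^d * ‖fourier2 ⇑a ((2*π:ℝ) • w, -x)‖
        ≤ (2*π)^d * (C * (((1 + ‖w‖)^(d+1))⁻¹ * ((1+‖x‖)^(d+1))⁻¹)) := by
          refine mul_le_mul_of_nonneg_left (hb1.trans ?_) (by positivity)
          gcongr
      _ = (2*π)^d * (C * ((1+‖x‖)^(d+1))⁻¹) * ((1 + ‖w‖)^(d+1))⁻¹ := by ring
  have hinv : 𝓕⁻ (𝓕 b) y = b y :=
    hb_int.fourierInv_fourier_eq hFb_int hb_cont.continuousAt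
  set H : Ed d → ℂ := fun w => 𝓕 b w * Complex.exp ((↑(2*π*⟪w, y⟫_ℝ) : ℂ) * Complex.I) with hHdef
  have hHξ : ∀ ξ : Ed d, H ((2*π:ℝ)⁻¹ • ξ)
      = 𝓕 b ((2*π:ℝ)⁻¹ • ξ) * Complex.exp ((⟪y, ξ⟫_ℝ : ℂ) * Complex.I) := by
    intro ξ
    have harg : 2*π*⟪(2*π:ℝ)⁻¹ • ξ, y⟫_ℝ = ⟪y, ξ⟫_ℝ := by
      rw [real_inner_smul_left, real_inner_comm]
      field_simp
    simp only [hHdef, harg]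
  have step1 : (∫ ξ : Ed d, fourier2 ⇑a (ξ, -x) * Complex.exp ((⟪y, ξ⟫_ℝ : ℂ) * Complex.I))
      = (((2*π:ℝ)^d))⁻¹ • ∫ ξ : Ed d, H ((2*π:ℝ)⁻¹ • ξ) := by
    rw [← MeasureTheory.integral_smul]
    congr 1
    funext ξ
    rw [hHξ ξ, h2 ξ, smul_mul_assoc]
  have step2 : (∫ ξ : Ed d, H ((2*π:ℝ)⁻¹ • ξ)) = ((2*π:ℝ)^d) • ∫ w, H w := by
    rw [MeasureTheory.Measure.integral_comp_smul volume H ((2*π:ℝ)⁻¹)]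
    congr 1
    rw [finrank_euclideanSpace_fin, inv_pow, inv_inv, abs_of_pos (by positivity)]
  have step3 : (∫ w, H w) = 𝓕⁻ (𝓕 b) y := by
    rw [Real.fourierInv_eq']
    congr 1
    funext w
    rw [smul_eq_mul]
    exact mul_comm _ _
  rw [step1, step2, step3, hinv, smul_smul,
    inv_mul_cancel₀ (by positivity : ((2*π:ℝ)^d) ≠ 0), one_smul]

lemma schwartz_bounded {E : Type*} [NormedAddCommGroup E] [NormedSpace ℝ E]
    (φ : SchwartzMap E ℂ) : ∃ C : ℝ, 0 ≤ C ∧ ∀ x, ‖φ x‖ ≤ C := by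
  obtain ⟨C, hC, h⟩ := schwartz_bound φ 0
  exact ⟨C, hC, fun x => by simpa using h x⟩

def Sfn (f g : SchwartzMap (Ed d) ℂ) (x ξ : Ed d) : ℂ :=
  ∫ y : Ed d, (starRingEnd ℂ) (g y) * f (y - x) * Complex.exp ((⟪y, ξ⟫_ℝ : ℂ) * Complex.I)

lemma Sfn_integrand_cont (f g : SchwartzMap (Ed d) ℂ) (x ξ : Ed d) :
    Continuous fun y : Ed d =>
      (starRingEnd ℂ) (g y) * f (y - x) * Complex.exp ((⟪y, ξ⟫_ℝ : ℂ) * Complex.I) := by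
  refine ((continuous_star.comp g.continuous).mul
    (f.continuous.comp (continuous_id.sub continuous_const))).mul ?_
  exact Complex.continuous_exp.comp ((Complex.continuous_ofReal.comp
    (continuous_id.inner continuous_const)).mul continuous_const)

lemma Sfn_integrand_int (f g : SchwartzMap (Ed d) ℂ) (x ξ : Ed d) :
    Integrable (fun y : Ed d =>
      (starRingEnd ℂ) (g y) * f (y - x) * Complex.exp ((⟪y, ξ⟫_ℝ : ℂ) * Complex.I)) := by
  obtain ⟨Cf, hCf, hf⟩ := schwartz_bounded f
  refine (g.integrable.norm.mul_const Cf).mono'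
    (Sfn_integrand_cont f g x ξ).aestronglyMeasurable ?_
  filter_upwards with y
  rw [norm_mul, norm_mul, norm_exp_pos_I, mul_one, RCLike.norm_conj]
  exact mul_le_mul_of_nonneg_left (hf _) (norm_nonneg _)

lemma conj_stft (f g : SchwartzMap (Ed d) ℂ) (x ξ : Ed d) :
    (starRingEnd ℂ) (stft ⇑f ⇑g x ξ) = ((2 * π) ^ (-(d : ℝ) / 2) : ℝ) • Sfn f g x ξ := by
  rw [stft, Sfn, Complex.real_smul, Complex.real_smul, map_mul, Complex.conj_ofReal,
    ← integral_conj]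
  congr 1
  congr 1
  funext y
  simp only [map_mul, Complex.conj_conj, ← Complex.exp_conj, map_neg, Complex.conj_ofReal,
    Complex.conj_I, neg_mul, neg_neg, mul_neg]

lemma Sfn_cont (f g : SchwartzMap (Ed d) ℂ) : Continuous fun p : Pd d => Sfn f g p.1 p.2 := by
  obtain ⟨Cf, hCf, hf⟩ := schwartz_bounded f
  apply continuous_of_dominated (bound := fun y : Ed d => ‖g y‖ * Cf)
  · exact fun p => (Sfn_integrand_cont f g p.1 p.2).aestronglyMeasurable
  · intro p
    filter_upwards with y
    rw [norm_mul, norm_mul, norm_exp_pos_I, mul_one, RCLike.norm_conj]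
    exact mul_le_mul_of_nonneg_left (hf _) (norm_nonneg _)
  · exact g.integrable.norm.mul_const Cf
  · filter_upwards with y
    refine (continuous_const.mul
      (f.continuous.comp (continuous_const.sub continuous_fst))).mul ?_
    exact Complex.continuous_exp.comp ((Complex.continuous_ofReal.comp
      (continuous_const.inner continuous_snd)).mul continuous_const)

lemma Sfn_bound (f g : SchwartzMap (Ed d) ℂ) :
    ∃ CS : ℝ, 0 ≤ CS ∧ ∀ x ξ : Ed d, ‖Sfn f g x ξ‖ ≤ CS := by
  obtain ⟨Cf, hCf, hf⟩ := schwartz_bounded f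
  refine ⟨(∫ y : Ed d, ‖g y‖) * Cf, by positivity, fun x ξ => ?_⟩
  have h := norm_integral_le_of_norm_le (μ := volume)
    (f := fun y : Ed d =>
      (starRingEnd ℂ) (g y) * f (y - x) * Complex.exp ((⟪y, ξ⟫_ℝ : ℂ) * Complex.I))
    (g.integrable.norm.mul_const Cf)
    (Filter.Eventually.of_forall fun y => by
      rw [norm_mul, norm_mul, norm_exp_pos_I, mul_one, RCLike.norm_conj]
      exact mul_le_mul_of_nonneg_left (hf _) (norm_nonneg _))
  rw [MeasureTheory.integral_mul_const] at h
  exact h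

lemma rhs_main (a : SchwartzMap (Pd d) ℂ) (f g : SchwartzMap (Ed d) ℂ) :
    L2pair (fun z : Pd d => fourier2 ⇑a (z.2, -z.1)) (fun z : Pd d => stft ⇑f ⇑g z.1 z.2)
      = ((2 * π) ^ (-(d : ℝ) / 2) : ℝ) •
        ∫ x : Ed d, ∫ y : Ed d,
          (starRingEnd ℂ) (g y) * f (y - x) * Kf ⇑a y (-x) := by
  obtain ⟨Cb, hCb, hb⟩ := fourier2_decay' a
  obtain ⟨CS, hCS, hS⟩ := Sfn_bound f g
  obtain ⟨Cf, hCf, hf⟩ := schwartz_bounded f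
  have hW : Continuous fun z : Pd d => fourier2 ⇑a (z.2, -z.1) :=
    (fourier2_cont a).comp (continuous_snd.prodMk continuous_fst.neg)
  rw [L2pair]
  have h1 : ∀ z : Pd d, fourier2 ⇑a (z.2, -z.1) * (starRingEnd ℂ) (stft ⇑f ⇑g z.1 z.2)
      = ((2 * π) ^ (-(d : ℝ) / 2) : ℝ) • (fourier2 ⇑a (z.2, -z.1) * Sfn f g z.1 z.2) := by
    intro z; rw [conj_stft, mul_smul_comm]
  simp_rw [h1]
  rw [integral_smul]
  congr 1
  have hPint : Integrable (fun z : Pd d => fourier2 ⇑a (z.2, -z.1) * Sfn f g z.1 z.2) := by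
    have hbint : Integrable (fun z : Pd d =>
        ((Cb * CS) * ((1+‖z.1‖)^(d+1))⁻¹) * ((1+‖z.2‖)^(d+1))⁻¹) := by
      rw [Measure.volume_eq_prod]
      exact ((integrable_decay d (d+1) (by omega)).const_mul (Cb * CS)).mul_prod
        (integrable_decay d (d+1) (by omega))
    refine hbint.mono' (hW.mul (Sfn_cont f g)).aestronglyMeasurable ?_
    filter_upwards with z
    rw [norm_mul]
    have h2 := hb z.2 (-z.1)
    rw [norm_neg] at h2
    calc ‖fourier2 ⇑a (z.2, -z.1)‖ * ‖Sfn f g z.1 z.2‖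
        ≤ (Cb * (((1+‖z.2‖)^(d+1))⁻¹ * ((1+‖z.1‖)^(d+1))⁻¹)) * CS :=
          mul_le_mul h2 (hS z.1 z.2) (norm_nonneg _) (by positivity)
      _ = ((Cb * CS) * ((1+‖z.1‖)^(d+1))⁻¹) * ((1+‖z.2‖)^(d+1))⁻¹ := by ring
  rw [Measure.volume_eq_prod] at hPint
  rw [show (volume : Measure (Pd d)) = (volume : Measure (Ed d)).prod volume from
    Measure.volume_eq_prod _ _, MeasureTheory.integral_prod _ hPint]
  congr 1
  funext x
  have h3 : ∀ ξ : Ed d, fourier2 ⇑a (ξ, -x) * Sfn f g x ξ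
      = ∫ y : Ed d, ((starRingEnd ℂ) (g y) * f (y - x)) *
          (fourier2 ⇑a (ξ, -x) * Complex.exp ((⟪y, ξ⟫_ℝ : ℂ) * Complex.I)) := by
    intro ξ
    rw [Sfn, ← MeasureTheory.integral_const_mul]
    congr 1; funext y; ring
  simp_rw [h3]
  have hSwInt : Integrable (Function.uncurry fun ξ y : Ed d =>
      ((starRingEnd ℂ) (g y) * f (y - x)) *
        (fourier2 ⇑a (ξ, -x) * Complex.exp ((⟪y, ξ⟫_ℝ : ℂ) * Complex.I)))
      (volume.prod volume) := by
    have hbint : Integrable (fun p : Ed d × Ed d =>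
        (Cb * ((1+‖p.1‖)^(d+1))⁻¹) * (Cf * ‖g p.2‖)) (volume.prod volume) :=
      ((integrable_decay d (d+1) (by omega)).const_mul Cb).mul_prod
        (g.integrable.norm.const_mul Cf)
    refine hbint.mono' ?_ ?_
    · apply Continuous.aestronglyMeasurable
      refine Continuous.mul ?_ ?_
      · exact ((continuous_star.comp (g.continuous.comp continuous_snd)).mul
          (f.continuous.comp ((continuous_snd).sub continuous_const)))
      · refine Continuous.mul ?_ ?_
        · exact (fourier2_cont a).comp (continuous_fst.prodMk continuous_const)
        · exact Complex.continuous_exp.comp ((Complex.continuous_ofReal.comp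
            (continuous_snd.inner continuous_fst)).mul continuous_const)
    · filter_upwards with p
      obtain ⟨ξ, y⟩ := p
      simp only [Function.uncurry_apply_pair]
      rw [norm_mul, norm_mul, norm_mul, norm_exp_pos_I, mul_one, RCLike.norm_conj]
      have h4 := hb ξ (-x)
      rw [norm_neg] at h4
      have h6 : ‖fourier2 ⇑a (ξ, -x)‖ ≤ Cb * ((1+‖ξ‖)^(d+1))⁻¹ := by
        refine h4.trans ?_
        have h5 : ((1+‖x‖)^(d+1))⁻¹ ≤ 1 := inv_pow_le_one (norm_nonneg x) (d+1)
        have h5' : (0:ℝ) ≤ ((1+‖ξ‖)^(d+1))⁻¹ := by positivity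
        exact mul_le_mul_of_nonneg_left (mul_le_of_le_one_right h5' h5) hCb
      calc ‖g y‖ * ‖f (y - x)‖ * ‖fourier2 ⇑a (ξ, -x)‖
          ≤ ‖g y‖ * Cf * (Cb * ((1+‖ξ‖)^(d+1))⁻¹) := by
            refine mul_le_mul ?_ h6 (norm_nonneg _) (by positivity)
            exact mul_le_mul_of_nonneg_left (hf _) (norm_nonneg _)
        _ = (Cb * ((1+‖ξ‖)^(d+1))⁻¹) * (Cf * ‖g y‖) := by ring
  rw [integral_integral_swap hSwInt]
  congr 1
  funext y
  rw [MeasureTheory.integral_const_mul, key_inversion a x y]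

lemma lhs_main (a : SchwartzMap (Pd d) ℂ) (f g : SchwartzMap (Ed d) ℂ) :
    L2pair (pseudoOp ⇑a ⇑f) ⇑g
      = ((2 * π) ^ (-(d : ℝ)) : ℝ) •
        ∫ x : Ed d, (∫ y : Ed d, f y * Kf ⇑a x (y - x)) * (starRingEnd ℂ) (g x) := by
  obtain ⟨Ca, hCa, ha⟩ := a_decay' a
  rw [L2pair]
  have hps : ∀ x : Ed d, pseudoOp ⇑a ⇑f x
      = ((2 * π) ^ (-(d : ℝ)) : ℝ) • ∫ y : Ed d, f y * Kf ⇑a x (y - x) := by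
    intro x
    rw [pseudoOp]
    congr 1
    have hSwInt : Integrable (Function.uncurry fun ξ y : Ed d =>
        a (x, ξ) * f y * Complex.exp ((⟪x - y, ξ⟫_ℝ : ℂ) * Complex.I)) (volume.prod volume) := by
      have hbint : Integrable (fun p : Ed d × Ed d =>
          (Ca * ((1+‖p.1‖)^(d+1))⁻¹) * ‖f p.2‖) (volume.prod volume) :=
        ((integrable_decay d (d+1) (by omega)).const_mul Ca).mul_prod f.integrable.norm
      refine hbint.mono' ?_ ?_
      · apply Continuous.aestronglyMeasurable
        refine Continuous.mul (Continuous.mul ?_ (f.continuous.comp continuous_snd)) ?_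
        · exact a.continuous.comp (continuous_const.prodMk continuous_fst)
        · exact Complex.continuous_exp.comp ((Complex.continuous_ofReal.comp
            ((continuous_const.sub continuous_snd).inner continuous_fst)).mul continuous_const)
      · filter_upwards with p
        obtain ⟨ξ, y⟩ := p
        simp only [Function.uncurry_apply_pair]
        rw [norm_mul, norm_mul, norm_exp_pos_I, mul_one]
        have h6 : ‖a (x, ξ)‖ ≤ Ca * ((1+‖ξ‖)^(d+1))⁻¹ := by
          refine (ha x ξ).trans ?_
          have h5 : ((1+‖x‖)^(d+1))⁻¹ ≤ 1 := inv_pow_le_one (norm_nonneg x) (d+1)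
          have h5' : (0:ℝ) ≤ ((1+‖ξ‖)^(d+1))⁻¹ := by positivity
          exact mul_le_mul_of_nonneg_left (mul_le_of_le_one_left h5' h5) hCa
        exact mul_le_mul h6 le_rfl (norm_nonneg _) (by positivity)
    rw [integral_integral_swap hSwInt]
    congr 1
    funext y
    have h7 : ∀ ξ : Ed d, a (x, ξ) * f y * Complex.exp ((⟪x - y, ξ⟫_ℝ : ℂ) * Complex.I)
        = f y * (a (x, ξ) * Complex.exp (-(⟪ξ, y - x⟫_ℝ : ℂ) * Complex.I)) := by
      intro ξ
      have hi : ⟪x - y, ξ⟫_ℝ = -⟪ξ, y - x⟫_ℝ := by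
        rw [real_inner_comm]
        simp [inner_sub_right]
      rw [hi]
      push_cast
      ring
    simp_rw [h7]
    rw [MeasureTheory.integral_const_mul]
    rfl
  simp_rw [hps, smul_mul_assoc]
  rw [integral_smul]

lemma swap_main (a : SchwartzMap (Pd d) ℂ) (f g : SchwartzMap (Ed d) ℂ) :
    (∫ x : Ed d, ∫ y : Ed d, (starRingEnd ℂ) (g y) * f (y - x) * Kf ⇑a y (-x))
      = ∫ x : Ed d, (∫ y : Ed d, f y * Kf ⇑a x (y - x)) * (starRingEnd ℂ) (g x) := by
  obtain ⟨CK, hCK, hK⟩ := Kf_decay a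
  set F : Ed d → Ed d → ℂ :=
    fun x y => (starRingEnd ℂ) (g y) * f (y - x) * Kf ⇑a y (-x) with hF
  have hFcont : Continuous (Function.uncurry F) := by
    refine Continuous.mul (Continuous.mul ?_ ?_) ?_
    · exact continuous_star.comp (g.continuous.comp continuous_snd)
    · exact f.continuous.comp (continuous_snd.sub continuous_fst)
    · exact (Kf_cont a).comp (continuous_snd.prodMk continuous_fst.neg)
  have hKbdd : ∀ y w : Ed d, ‖Kf ⇑a y w‖ ≤ CK := by
    intro y w
    have := hK y w
    have h9 := inv_pow_le_one (norm_nonneg y) (d+1)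
    have h10 : (0:ℝ) ≤ ((1+‖y‖)^(d+1))⁻¹ := by positivity
    nlinarith
  have hFint : Integrable (Function.uncurry F) (volume.prod volume) := by
    rw [integrable_prod_iff' hFcont.aestronglyMeasurable]
    constructor
    · filter_upwards with y
      have h1 : Integrable (fun x : Ed d => Kf ⇑a y (-x) * f (y - x)) := by
        refine Integrable.bdd_mul (f.integrable.comp_sub_left y) ?_ (Filter.Eventually.of_forall fun x => hKbdd y (-x))
        exact (((Kf_cont a).comp
          (continuous_const.prodMk continuous_id.neg))).aestronglyMeasurable
      exact (h1.const_mul ((starRingEnd ℂ) (g y))).congr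
        (Filter.Eventually.of_forall fun x => by
          simp only [hF, Function.uncurry_apply_pair]; ring)
    · have hmeas : AEStronglyMeasurable
          (fun y : Ed d => ∫ x : Ed d, ‖Function.uncurry F (x, y)‖) volume :=
        (hFcont.norm.stronglyMeasurable.integral_prod_left').aestronglyMeasurable
      refine ((g.integrable.norm.const_mul (CK * ∫ t : Ed d, ‖f t‖)).mono' hmeas ?_)
      filter_upwards with y
      rw [Real.norm_eq_abs, _root_.abs_of_nonneg (integral_nonneg fun x => norm_nonneg _)]
      have hb : ∀ x : Ed d, ‖Function.uncurry F (x, y)‖ ≤ (CK * ‖g y‖) * ‖f (y - x)‖ := by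
        intro x
        simp only [Function.uncurry_apply_pair, hF]
        rw [norm_mul, norm_mul, RCLike.norm_conj]
        calc ‖g y‖ * ‖f (y - x)‖ * ‖Kf ⇑a y (-x)‖
            ≤ ‖g y‖ * ‖f (y - x)‖ * CK :=
              mul_le_mul_of_nonneg_left (hKbdd y (-x)) (by positivity)
          _ = (CK * ‖g y‖) * ‖f (y - x)‖ := by ring
      calc (∫ x : Ed d, ‖Function.uncurry F (x, y)‖)
          ≤ ∫ x : Ed d, (CK * ‖g y‖) * ‖f (y - x)‖ := by
            refine integral_mono_of_nonneg (Filter.Eventually.of_forall fun x => norm_nonneg _)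
              ((f.integrable.norm.comp_sub_left y).const_mul _)
              (Filter.Eventually.of_forall hb)
        _ = (CK * ‖g y‖) * ∫ x : Ed d, ‖f (y - x)‖ := MeasureTheory.integral_const_mul _ _
        _ = (CK * ‖g y‖) * ∫ t : Ed d, ‖f t‖ := by
            rw [MeasureTheory.integral_sub_left_eq_self (fun t => ‖f t‖) volume y]
        _ = CK * (∫ t : Ed d, ‖f t‖) * ‖g y‖ := by ring
  rw [integral_integral_swap hFint]
  congr 1
  funext y
  have hCoV : (∫ x : Ed d, F x y)
      = ∫ x : Ed d, (starRingEnd ℂ) (g y) * f x * Kf ⇑a y (x - y) := by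
    rw [← MeasureTheory.integral_sub_left_eq_self
      (fun x => (starRingEnd ℂ) (g y) * f x * Kf ⇑a y (x - y)) volume y]
    congr 1
    funext x
    simp only [hF, sub_sub_cancel, sub_sub_cancel_left]
  rw [hCoV]
  have h11 : ∀ x : Ed d, (starRingEnd ℂ) (g y) * f x * Kf ⇑a y (x - y)
      = (f x * Kf ⇑a y (x - y)) * (starRingEnd ℂ) (g y) := fun x => by ring
  simp_rw [h11]
  rw [MeasureTheory.integral_mul_const]

end Stmt16

theorem stmt16 (d : ℕ) (hd : 1 ≤ d) (a : SchwartzMap (Pd d) ℂ)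
    (f g : SchwartzMap (Ed d) ℂ) :
    L2pair (pseudoOp (⇑a) (⇑f)) (⇑g) =
      ((2 * π) ^ (-(d : ℝ) / 2) : ℝ) •
        L2pair (fun z : Pd d => fourier2 (⇑a) (z.2, -z.1))
          (fun z : Pd d => stft (⇑f) (⇑g) z.1 z.2) := by
  rw [Stmt16.lhs_main a f g, Stmt16.rhs_main a f g, smul_smul, ← Stmt16.swap_main a f g]
  congr 1
  rw [← Real.rpow_add Stmt16.two_pi_pos]
  norm_num

end
end

section
/- Let d ≥ 1 and let a, b be Schwartz functions on ℝ^{2d}. Then 𝓕_σ(a ∗_σ b) = (𝓕_σ a) ∗_σ b = ǎ ∗_σ (𝓕_σ b), where ǎ(X) = a(−X). -/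
open MeasureTheory Real Complex
open scoped ENNReal NNReal InnerProductSpace

noncomputable section

namespace Stmt19Aux

open MeasureTheory Function

instance instBorelPd (d : ℕ) : BorelSpace (Pd d) := Prod.borelSpace

instance instBorelPd2 (d : ℕ) : BorelSpace (Pd d × Pd d) := Prod.borelSpace

instance instHaarPd (d : ℕ) : (volume : Measure (Pd d)).IsAddHaarMeasure :=
  show (Measure.prod volume volume).IsAddHaarMeasure from
    Measure.prod.instIsAddHaarMeasure _ _

instance instNegPd (d : ℕ) : (volume : Measure (Pd d)).IsNegInvariant := by
  constructor
  rw [Measure.neg, Measure.volume_eq_prod]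
  have := ((Measure.measurePreserving_neg (volume : Measure (Ed d))).prod
    (Measure.measurePreserving_neg (volume : Measure (Ed d)))).map_eq
  convert this using 2
  all_goals rfl

/-- The character `r ↦ e^{2 i r}`. -/
def ce (r : ℝ) : ℂ := Complex.exp (2 * Complex.I * (r : ℂ))

lemma ce_add (r s : ℝ) : ce (r + s) = ce r * ce s := by
  rw [ce, ce, ce, ← Complex.exp_add]
  congr 1
  push_cast
  ring

lemma norm_ce (r : ℝ) : ‖ce r‖ = 1 := by
  simp [ce, Complex.norm_exp]

lemma cont_ce : Continuous ce :=
  Complex.continuous_exp.comp (continuous_const.mul Complex.continuous_ofReal)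

lemma cont_symp {d : ℕ} {α : Type*} [TopologicalSpace α] {f g : α → Pd d}
    (hf : Continuous f) (hg : Continuous g) :
    Continuous fun x => sympForm (f x) (g x) :=
  ((hg.fst.inner hf.snd)).sub ((hf.fst.inner hg.snd))

lemma int_ab {d : ℕ} (a b : SchwartzMap (Pd d) ℂ) {φ : Pd d × Pd d → ℝ}
    (hφ : Continuous φ) :
    Integrable (fun P : Pd d × Pd d => a P.1 * b P.2 * ce (φ P))
      ((volume : Measure (Pd d)).prod volume) := by
  have h0 : Integrable (fun P : Pd d × Pd d => a P.1 * b P.2)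
      ((volume : Measure (Pd d)).prod volume) :=
    a.integrable.mul_prod b.integrable
  have h1 := h0.bdd_mul ((cont_ce.comp hφ).aestronglyMeasurable)
    (Filter.Eventually.of_forall fun P => le_of_eq (norm_ce _))
  refine h1.congr (Filter.Eventually.of_forall fun P => ?_)
  simp only [Function.comp_apply]
  ring

lemma int_shear {d : ℕ} (a b : SchwartzMap (Pd d) ℂ) {φ : Pd d × Pd d → ℝ}
    (hφ : Continuous φ) :
    Integrable (fun P : Pd d × Pd d => a (P.1 - P.2) * b P.2 * ce (φ P))
      ((volume : Measure (Pd d)).prod volume) := by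
  have hs : MeasurePreserving (fun P : Pd d × Pd d => (P.1 - P.2, P.2))
      ((volume : Measure (Pd d)).prod volume) ((volume : Measure (Pd d)).prod volume) :=
    measurePreserving_sub_prod _ _
  have hψc : Continuous fun Q : Pd d × Pd d => φ (Q.1 + Q.2, Q.2) :=
    hφ.comp ((continuous_fst.add continuous_snd).prodMk continuous_snd)
  have hG : Integrable (fun Q : Pd d × Pd d => a Q.1 * b Q.2 * ce (φ (Q.1 + Q.2, Q.2)))
      ((volume : Measure (Pd d)).prod volume) := int_ab a b hψc
  have h2 := (hs.integrable_comp hG.aestronglyMeasurable).2 hG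
  refine h2.congr (Filter.Eventually.of_forall fun P => ?_)
  show a (P.1 - P.2) * b P.2 * ce (φ (P.1 - P.2 + P.2, P.2)) = _
  rw [sub_add_cancel]

lemma symp1 {d : ℕ} (X Z Y : Pd d) :
    sympForm (Z + Y) Y + sympForm X (Z + Y)
      = sympForm Z Y + sympForm X Z + sympForm X Y := by
  simp only [sympForm, Prod.fst_add, Prod.snd_add, inner_add_left, inner_add_right]
  ring

lemma symp2 {d : ℕ} (X Y W : Pd d) :
    sympForm (X - Y) W + sympForm X Y
      = sympForm W Y + sympForm X W + sympForm X Y := by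
  simp only [sympForm, Prod.fst_sub, Prod.snd_sub, inner_sub_left, inner_sub_right]
  ring

lemma symp3 {d : ℕ} (X Y W : Pd d) :
    sympForm (Y + X) W + sympForm X (Y + X)
      = sympForm Y W + sympForm X Y + sympForm X W := by
  simp only [sympForm, Prod.fst_add, Prod.snd_add, inner_add_left, inner_add_right]
  ring

/-- The common value of all three expressions, up to the scalar. -/
def Tv {d : ℕ} (a b : SchwartzMap (Pd d) ℂ) (X : Pd d) : ℂ :=
  ∫ Y : Pd d, ∫ W : Pd d,
    a W * b Y * ce (sympForm W Y + sympForm X W + sympForm X Y)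

lemma rhs1_eq {d : ℕ} (a b : SchwartzMap (Pd d) ℂ) (X : Pd d) :
    twConv (sFT (⇑a)) (⇑b) X
      = (((2 / π) ^ ((d : ℝ) / 2) : ℝ) * ((π : ℝ) ^ d)⁻¹) • Tv a b X := by
  rw [twConv]
  have e1 : ∀ Y : Pd d, sFT (⇑a) (X - Y) * b Y
        * Complex.exp (2 * Complex.I * (sympForm X Y : ℂ))
      = (((π : ℝ) ^ d)⁻¹ : ℝ) • ∫ W : Pd d,
          a W * b Y * ce (sympForm W Y + sympForm X W + sympForm X Y) := by
    intro Y
    rw [sFT, smul_mul_assoc, smul_mul_assoc, ← integral_mul_const, ← integral_mul_const]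
    congr 1
    refine integral_congr_ae (Filter.Eventually.of_forall fun W => ?_)
    dsimp only
    show a W * ce (sympForm (X - Y) W) * b Y * ce (sympForm X Y) = _
    rw [← symp2 X Y W, ce_add]
    ring
  simp_rw [e1]
  rw [integral_smul, smul_smul]
  rfl

lemma lhs_eq {d : ℕ} (a b : SchwartzMap (Pd d) ℂ) (X : Pd d) :
    sFT (twConv (⇑a) (⇑b)) X
      = (((2 / π) ^ ((d : ℝ) / 2) : ℝ) * ((π : ℝ) ^ d)⁻¹) • Tv a b X := by
  rw [sFT]
  have e1 : ∀ Z : Pd d, twConv (⇑a) (⇑b) Z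
        * Complex.exp (2 * Complex.I * (sympForm X Z : ℂ))
      = (((2 / π) ^ ((d : ℝ) / 2) : ℝ)) • ∫ Y : Pd d,
          a (Z - Y) * b Y * ce (sympForm Z Y + sympForm X Z) := by
    intro Z
    rw [twConv, smul_mul_assoc, ← integral_mul_const]
    congr 1
    refine integral_congr_ae (Filter.Eventually.of_forall fun Y => ?_)
    dsimp only
    show a (Z - Y) * b Y * ce (sympForm Z Y) * ce (sympForm X Z) = _
    rw [ce_add]
    ring
  simp_rw [e1]
  rw [integral_smul, smul_smul, mul_comm]
  congr 1
  have hint : Integrable (uncurry fun Z Y : Pd d =>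
      a (Z - Y) * b Y * ce (sympForm Z Y + sympForm X Z))
      ((volume : Measure (Pd d)).prod volume) :=
    int_shear a b ((cont_symp continuous_fst continuous_snd).add
      (cont_symp continuous_const continuous_fst))
  rw [integral_integral_swap hint]
  rw [Tv]
  refine integral_congr_ae (Filter.Eventually.of_forall fun Y => ?_)
  dsimp only
  rw [← integral_add_right_eq_self
    (fun Z => a (Z - Y) * b Y * ce (sympForm Z Y + sympForm X Z)) Y]
  refine integral_congr_ae (Filter.Eventually.of_forall fun Z => ?_)
  dsimp only
  show a (Z + Y - Y) * b Y * ce (sympForm (Z + Y) Y + sympForm X (Z + Y)) = _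
  rw [add_sub_cancel_right, symp1]

lemma rhs2_eq {d : ℕ} (a b : SchwartzMap (Pd d) ℂ) (X : Pd d) :
    twConv (fun Z : Pd d => a (-Z)) (sFT (⇑b)) X
      = (((2 / π) ^ ((d : ℝ) / 2) : ℝ) * ((π : ℝ) ^ d)⁻¹) • Tv a b X := by
  rw [twConv]
  have e1 : ∀ Y : Pd d, a (-(X - Y)) * sFT (⇑b) Y
        * Complex.exp (2 * Complex.I * (sympForm X Y : ℂ))
      = (((π : ℝ) ^ d)⁻¹ : ℝ) • ∫ W : Pd d,
          a (Y - X) * b W * ce (sympForm Y W + sympForm X Y) := by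
    intro Y
    rw [sFT, mul_smul_comm, smul_mul_assoc, neg_sub]
    congr 1
    rw [← integral_const_mul, ← integral_mul_const]
    refine integral_congr_ae (Filter.Eventually.of_forall fun W => ?_)
    dsimp only
    show a (Y - X) * (b W * ce (sympForm Y W)) * ce (sympForm X Y) = _
    rw [ce_add]
    ring
  simp_rw [e1]
  rw [integral_smul, smul_smul]
  congr 1
  rw [← integral_add_right_eq_self
    (fun Y => ∫ W : Pd d, a (Y - X) * b W * ce (sympForm Y W + sympForm X Y)) X]
  have e2 : ∀ Y : Pd d, (∫ W : Pd d,
        a (Y + X - X) * b W * ce (sympForm (Y + X) W + sympForm X (Y + X)))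
      = ∫ W : Pd d, a Y * b W * ce (sympForm Y W + sympForm X Y + sympForm X W) := by
    intro Y
    refine integral_congr_ae (Filter.Eventually.of_forall fun W => ?_)
    dsimp only
    show a (Y + X - X) * b W * ce (sympForm (Y + X) W + sympForm X (Y + X)) = _
    rw [add_sub_cancel_right, symp3]
  simp_rw [e2]
  have hint : Integrable (uncurry fun Y W : Pd d =>
      a Y * b W * ce (sympForm Y W + sympForm X Y + sympForm X W))
      ((volume : Measure (Pd d)).prod volume) :=
    int_ab a b (((cont_symp continuous_fst continuous_snd).add
      (cont_symp continuous_const continuous_fst)).add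
      (cont_symp continuous_const continuous_snd))
  rw [integral_integral_swap hint, Tv]

end Stmt19Aux

theorem stmt19 (d : ℕ) (hd : 1 ≤ d) (a b : SchwartzMap (Pd d) ℂ) (X : Pd d) :
    sFT (twConv (⇑a) (⇑b)) X = twConv (sFT (⇑a)) (⇑b) X ∧
      twConv (sFT (⇑a)) (⇑b) X = twConv (fun Z : Pd d => a (-Z)) (sFT (⇑b)) X := by
  exact ⟨(Stmt19Aux.lhs_eq a b X).trans (Stmt19Aux.rhs1_eq a b X).symm,
    (Stmt19Aux.rhs1_eq a b X).trans (Stmt19Aux.rhs2_eq a b X).symm⟩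

end
end
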